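/- Let τ0 > 0 and for (d,v) ∈ ℝ² write Z = d + τ0·v. Let D ⊂ ℝ² be a bounded Lebesgue-measurable set, D0 = D ∩ {Z ≥ 0}, D1 = D ∩ {Z < 0}, and let u : ℝ² → ℝ be Lebesgue integrable on D with u(d,v) > 0 for all (d,v) ∈ D. Then U is differentiable in σ on (0,∞), with ∂U/∂σ(λ,σ) = (1/(√(2π)·σ²)) · [ ∬_{D0} u(d,v) exp(−(Z−λ)²/(2σ²)) (Z−λ) dd dv − ∬_{D1} u(d,v) exp(−(Z−λ)²/(2σ²)) (Z−λ) dd dv ], and for all λ ∈ ℝ and σ > 0 this satisfies the identity ∂U/∂σ(λ,σ) = σ · ∂²U/∂λ²(λ,σ). -/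

import Mathlib

open MeasureTheory Real Filter
set_option maxHeartbeats 1000000

/-- The Gaussian Q-function `Q(x) = (1/√(2π)) ∫_x^∞ exp(−t²/2) dt`. -/
noncomputable def Qfun (x : ℝ) : ℝ :=
  (Real.sqrt (2 * Real.pi))⁻¹ * ∫ t in Set.Ioi x, Real.exp (-t ^ 2 / 2)

/-- The wrong-decision probability `P_w(d,v;λ,σ)`. -/
noncomputable def Pw (τ0 σ lam : ℝ) (p : ℝ × ℝ) : ℝ :=
  if 0 ≤ p.1 + τ0 * p.2 then Qfun ((p.1 + τ0 * p.2 - lam) / σ)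
  else Qfun (-(p.1 + τ0 * p.2 - lam) / σ)

/-- The total wrong decision loss `U(λ,σ) = ∬_D u(d,v) P_w(d,v;λ,σ) dd dv`. -/
noncomputable def Uloss (τ0 : ℝ) (D : Set (ℝ × ℝ)) (u : ℝ × ℝ → ℝ) (lam σ : ℝ) : ℝ :=
  ∫ p in D, u p * Pw τ0 σ lam p


lemma gauss_integrable : Integrable (fun t : ℝ => Real.exp (-t ^ 2 / 2)) := by
  have := integrable_exp_neg_mul_sq (b := (1/2 : ℝ)) (by norm_num)
  convert this using 2 with t
  ring_nf

lemma Qfun_hasDerivAt (x : ℝ) :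
    HasDerivAt Qfun (-(Real.sqrt (2 * Real.pi))⁻¹ * Real.exp (-x ^ 2 / 2)) x := by
  have hint : Integrable (fun t : ℝ => Real.exp (-t ^ 2 / 2)) := gauss_integrable
  have hrepr : ∀ y : ℝ, Qfun y = (Real.sqrt (2 * Real.pi))⁻¹ *
      ((∫ t : ℝ, Real.exp (-t ^ 2 / 2)) - (∫ t in Set.Iic 0, Real.exp (-t ^ 2 / 2))
        - ∫ t in (0:ℝ)..y, Real.exp (-t ^ 2 / 2)) := by
    intro y
    have h1 := intervalIntegral.integral_Iic_add_Ioi (b := y)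
      (f := fun t : ℝ => Real.exp (-t ^ 2 / 2)) hint.integrableOn hint.integrableOn
    have h2 := intervalIntegral.integral_Iic_sub_Iic (a := (0:ℝ)) (b := y)
      (f := fun t : ℝ => Real.exp (-t ^ 2 / 2)) hint.integrableOn hint.integrableOn
    rw [Qfun, ← h2, ← h1]; ring
  have hd : HasDerivAt (fun y => ∫ t in (0:ℝ)..y, Real.exp (-t ^ 2 / 2))
      (Real.exp (-x ^ 2 / 2)) x :=
    intervalIntegral.integral_hasDerivAt_right hint.intervalIntegrable
      hint.1.stronglyMeasurableAtFilter (Real.continuous_exp.comp (by continuity)).continuousAt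
  have h := ((hd.const_sub ((∫ t : ℝ, Real.exp (-t ^ 2 / 2))
      - (∫ t in Set.Iic 0, Real.exp (-t ^ 2 / 2)))).const_mul
      ((Real.sqrt (2 * Real.pi))⁻¹)).congr_of_eventuallyEq
      (Filter.Eventually.of_forall hrepr)
  rw [show -(Real.sqrt (2 * Real.pi))⁻¹ * Real.exp (-x ^ 2 / 2) = (Real.sqrt (2 * Real.pi))⁻¹ * -Real.exp (-x ^ 2 / 2) by ring]; exact h

lemma Qfun_continuous : Continuous Qfun :=
  continuous_iff_continuousAt.mpr fun x => (Qfun_hasDerivAt x).continuousAt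

lemma Qfun_abs_le (y : ℝ) :
    |Qfun y| ≤ (Real.sqrt (2 * Real.pi))⁻¹ * ∫ t : ℝ, Real.exp (-t ^ 2 / 2) := by
  have h0 : (0:ℝ) ≤ ∫ t in Set.Ioi y, Real.exp (-t ^ 2 / 2) :=
    setIntegral_nonneg measurableSet_Ioi fun t _ => (Real.exp_pos _).le
  have h1 : (∫ t in Set.Ioi y, Real.exp (-t ^ 2 / 2)) ≤ ∫ t : ℝ, Real.exp (-t ^ 2 / 2) :=
    setIntegral_le_integral gauss_integrable
      (Filter.Eventually.of_forall fun t => (Real.exp_pos _).le)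
  rw [Qfun, abs_mul, abs_of_nonneg (inv_nonneg.mpr (Real.sqrt_nonneg _)), abs_of_nonneg h0]
  exact mul_le_mul_of_nonneg_left h1 (inv_nonneg.mpr (Real.sqrt_nonneg _))

noncomputable def sgn (z : ℝ) : ℝ := if 0 ≤ z then 1 else -1

lemma sgn_abs (z : ℝ) : |sgn z| = 1 := by
  rw [sgn]; split_ifs <;> simp

lemma measurable_sgn : Measurable sgn :=
  Measurable.ite (measurableSet_le measurable_const measurable_id)
    measurable_const measurable_const

noncomputable def Ffun (a b z : ℝ) : ℝ :=
  if 0 ≤ z then Qfun ((z - a) / b) else Qfun (-(z - a) / b)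

noncomputable def f1' (a b z : ℝ) : ℝ :=
  sgn z * ((Real.sqrt (2 * Real.pi) * b ^ 2)⁻¹ *
    (Real.exp (-(z - a) ^ 2 / (2 * b ^ 2)) * (z - a)))

noncomputable def f2' (b a z : ℝ) : ℝ :=
  sgn z * ((Real.sqrt (2 * Real.pi) * b)⁻¹ * Real.exp (-(z - a) ^ 2 / (2 * b ^ 2)))

noncomputable def f3' (b a z : ℝ) : ℝ :=
  sgn z * ((Real.sqrt (2 * Real.pi) * b)⁻¹ *
    (Real.exp (-(z - a) ^ 2 / (2 * b ^ 2)) * ((z - a) / b ^ 2)))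

lemma measurable_Ffun (a b : ℝ) : Measurable (fun z => Ffun a b z) := by
  refine Measurable.ite (measurableSet_le measurable_const measurable_id) ?_ ?_
  · exact Qfun_continuous.measurable.comp ((measurable_id.sub_const a).div_const b)
  · exact Qfun_continuous.measurable.comp (((measurable_id.sub_const a).neg).div_const b)

lemma measurable_f1' (a b : ℝ) : Measurable (fun z => f1' a b z) :=
  measurable_sgn.mul (Continuous.measurable (by continuity))

lemma measurable_f2' (b a : ℝ) : Measurable (fun z => f2' b a z) :=
  measurable_sgn.mul (Continuous.measurable (by continuity))

lemma measurable_f3' (b a : ℝ) : Measurable (fun z => f3' b a z) :=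
  measurable_sgn.mul (Continuous.measurable (by continuity))

lemma expArg_eq (w b : ℝ) (hb : b ≠ 0) : -(w / b) ^ 2 / 2 = -w ^ 2 / (2 * b ^ 2) := by
  rw [div_pow]; ring

lemma sqrt2pi_pos : 0 < Real.sqrt (2 * Real.pi) :=
  Real.sqrt_pos.mpr (by positivity)

lemma L1 (a z : ℝ) {b : ℝ} (hb : b ≠ 0) :
    HasDerivAt (fun b => Ffun a b z) (f1' a b z) b := by
  by_cases hz : 0 ≤ z
  · have hinner : HasDerivAt (fun b : ℝ => (z - a) / b) ((z - a) * (-(b ^ 2)⁻¹)) b := by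
      simpa [div_eq_mul_inv] using (hasDerivAt_inv hb).const_mul (z - a)
    have h := (Qfun_hasDerivAt ((z - a) / b)).comp b hinner
    have heq : (fun b => Ffun a b z) = fun b => Qfun ((z - a) / b) := by
      funext b; simp [Ffun, hz]
    rw [heq]
    have hval : f1' a b z = (-(Real.sqrt (2 * Real.pi))⁻¹ *
        Real.exp (-((z - a) / b) ^ 2 / 2)) * ((z - a) * (-(b ^ 2)⁻¹)) := by
      rw [expArg_eq _ _ hb, f1', sgn, if_pos hz, mul_inv]; ring
    rw [hval]; exact h
  · have hinner : HasDerivAt (fun b : ℝ => -(z - a) / b) (-(z - a) * (-(b ^ 2)⁻¹)) b := by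
      simpa [div_eq_mul_inv] using (hasDerivAt_inv hb).const_mul (-(z - a))
    have h := (Qfun_hasDerivAt (-(z - a) / b)).comp b hinner
    have heq : (fun b => Ffun a b z) = fun b => Qfun (-(z - a) / b) := by
      funext b; simp [Ffun, hz]
    rw [heq]
    have hval : f1' a b z = (-(Real.sqrt (2 * Real.pi))⁻¹ *
        Real.exp (-(-(z - a) / b) ^ 2 / 2)) * (-(z - a) * (-(b ^ 2)⁻¹)) := by
      rw [expArg_eq _ _ hb, neg_pow, f1', sgn, if_neg hz, mul_inv]; ring_nf
    rw [hval]; exact h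

lemma L2 (b z : ℝ) (hb : b ≠ 0) (a : ℝ) :
    HasDerivAt (fun a => Ffun a b z) (f2' b a z) a := by
  by_cases hz : 0 ≤ z
  · have hinner : HasDerivAt (fun a : ℝ => (z - a) / b) ((-1) / b) a :=
      ((hasDerivAt_id a).const_sub z).div_const b
    have h := (Qfun_hasDerivAt ((z - a) / b)).comp a hinner
    have heq : (fun a => Ffun a b z) = fun a => Qfun ((z - a) / b) := by
      funext a; simp [Ffun, hz]
    rw [heq]
    have hval : f2' b a z = (-(Real.sqrt (2 * Real.pi))⁻¹ *
        Real.exp (-((z - a) / b) ^ 2 / 2)) * ((-1) / b) := by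
      rw [expArg_eq _ _ hb, f2', sgn, if_pos hz, mul_inv]; ring
    rw [hval]; exact h
  · have hinner0 : HasDerivAt (fun a : ℝ => (a - z) / b) (1 / b) a := by
      simpa using ((hasDerivAt_id a).sub_const z).div_const b
    have hinner : HasDerivAt (fun a : ℝ => -(z - a) / b) (1 / b) a :=
      hinner0.congr_of_eventuallyEq (Filter.Eventually.of_forall fun a => by ring)
    have h := (Qfun_hasDerivAt (-(z - a) / b)).comp a hinner
    have heq : (fun a => Ffun a b z) = fun a => Qfun (-(z - a) / b) := by
      funext a; simp [Ffun, hz]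
    rw [heq]
    have hval : f2' b a z = (-(Real.sqrt (2 * Real.pi))⁻¹ *
        Real.exp (-(-(z - a) / b) ^ 2 / 2)) * (1 / b) := by
      rw [expArg_eq _ _ hb, neg_pow, f2', sgn, if_neg hz, mul_inv]; ring_nf
    rw [hval]; exact h

lemma L3 (b z : ℝ) (a : ℝ) :
    HasDerivAt (fun a => f2' b a z) (f3' b a z) a := by
  have hexp : HasDerivAt (fun a : ℝ => Real.exp (-(z - a) ^ 2 / (2 * b ^ 2)))
      (Real.exp (-(z - a) ^ 2 / (2 * b ^ 2)) * (-((2:ℕ) * (z - a) ^ 1 * (-1)) / (2 * b ^ 2))) a :=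
    ((((hasDerivAt_id a).const_sub z).pow 2).neg.div_const (2 * b ^ 2)).exp
  have h := (hexp.const_mul ((Real.sqrt (2 * Real.pi) * b)⁻¹)).const_mul (sgn z)
  have hval : f3' b a z = sgn z * ((Real.sqrt (2 * Real.pi) * b)⁻¹ *
      (Real.exp (-(z - a) ^ 2 / (2 * b ^ 2)) * (-((2:ℕ) * (z - a) ^ 1 * (-1)) / (2 * b ^ 2)))) := by
    rw [f3']; ring
  rw [show (fun a => f2' b a z) = fun a => sgn z * ((Real.sqrt (2 * Real.pi) * b)⁻¹ *
      Real.exp (-(z - a) ^ 2 / (2 * b ^ 2))) from rfl, hval]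
  exact h

lemma key {D : Set (ℝ × ℝ)} (hD : MeasurableSet D) {u : ℝ × ℝ → ℝ}
    (hu : IntegrableOn u D volume) {Z : ℝ × ℝ → ℝ} (hZ : Measurable Z)
    {f f' : ℝ → ℝ → ℝ} {x₀ ε C C₀ : ℝ} (hε : 0 < ε)
    (hfm : ∀ x, Measurable (f x))
    (hf'm : Measurable (f' x₀))
    (hbound₀ : ∀ p ∈ D, |f x₀ (Z p)| ≤ C₀)
    (hbound : ∀ p ∈ D, ∀ x ∈ Metric.ball x₀ ε, |f' x (Z p)| ≤ C)
    (hderiv : ∀ p ∈ D, ∀ x ∈ Metric.ball x₀ ε, HasDerivAt (fun y => f y (Z p)) (f' x (Z p)) x) :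
    IntegrableOn (fun p => u p * f' x₀ (Z p)) D volume ∧
    HasDerivAt (fun x => ∫ p in D, u p * f x (Z p)) (∫ p in D, u p * f' x₀ (Z p)) x₀ := by
  have hae : ∀ᵐ p ∂(volume.restrict D), p ∈ D := ae_restrict_mem hD
  have humeas : AEStronglyMeasurable u (volume.restrict D) := hu.1
  have hF_meas : ∀ᶠ x in nhds x₀, AEStronglyMeasurable
      (fun p => u p * f x (Z p)) (volume.restrict D) :=
    Filter.Eventually.of_forall fun x =>
      humeas.mul (((hfm x).comp hZ).aestronglyMeasurable)
  have hF_int : Integrable (fun p => u p * f x₀ (Z p)) (volume.restrict D) := by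
    refine Integrable.mono' (hu.norm.const_mul C₀) (hF_meas.self_of_nhds) ?_
    refine hae.mono fun p hp => ?_
    rw [norm_mul]
    calc ‖u p‖ * ‖f x₀ (Z p)‖ ≤ ‖u p‖ * C₀ := by
          exact mul_le_mul_of_nonneg_left (hbound₀ p hp) (norm_nonneg _)
      _ = C₀ * ‖u p‖ := by ring
  have hF'_meas : AEStronglyMeasurable (fun p => u p * f' x₀ (Z p)) (volume.restrict D) :=
    humeas.mul ((hf'm.comp hZ).aestronglyMeasurable)
  have h_bound : ∀ᵐ p ∂(volume.restrict D), ∀ x ∈ Metric.ball x₀ ε,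
      ‖u p * f' x (Z p)‖ ≤ C * ‖u p‖ := by
    refine hae.mono fun p hp x hx => ?_
    rw [norm_mul]
    calc ‖u p‖ * ‖f' x (Z p)‖ ≤ ‖u p‖ * C :=
          mul_le_mul_of_nonneg_left (hbound p hp x hx) (norm_nonneg _)
      _ = C * ‖u p‖ := by ring
  have h_diff : ∀ᵐ p ∂(volume.restrict D), ∀ x ∈ Metric.ball x₀ ε,
      HasDerivAt (fun y => u p * f y (Z p)) (u p * f' x (Z p)) x :=
    hae.mono fun p hp x hx => (hderiv p hp x hx).const_mul (u p)
  exact hasDerivAt_integral_of_dominated_loc_of_deriv_le (Metric.ball_mem_nhds x₀ hε) hF_meas hF_int hF'_meas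
    h_bound (hu.norm.const_mul C) h_diff

lemma split {D : Set (ℝ × ℝ)} (hD : MeasurableSet D) {Z : ℝ × ℝ → ℝ} (hZ : Measurable Z)
    {g : ℝ × ℝ → ℝ}
    (hint : IntegrableOn (fun p => (if 0 ≤ Z p then (1:ℝ) else -1) * g p) D volume) :
    ∫ p in D, (if 0 ≤ Z p then (1:ℝ) else -1) * g p
      = (∫ p in D ∩ {p | 0 ≤ Z p}, g p) - ∫ p in D ∩ {p | Z p < 0}, g p := by
  have hm0 : MeasurableSet {p : ℝ × ℝ | 0 ≤ Z p} := hZ measurableSet_Ici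
  have hm1 : MeasurableSet {p : ℝ × ℝ | Z p < 0} := hZ measurableSet_Iio
  have hdisj : Disjoint (D ∩ {p | 0 ≤ Z p}) (D ∩ {p | Z p < 0}) := by
    refine Set.disjoint_left.mpr fun p hp0 hp1 => ?_
    simp only [Set.mem_inter_iff, Set.mem_setOf_eq] at hp0 hp1
    exact absurd hp1.2 (not_lt.mpr hp0.2)
  have hunion : (D ∩ {p | 0 ≤ Z p}) ∪ (D ∩ {p | Z p < 0}) = D := by
    rw [← Set.inter_union_distrib_left]
    have : {p : ℝ × ℝ | 0 ≤ Z p} ∪ {p | Z p < 0} = Set.univ := by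
      ext p; simp [le_or_gt]
    simp [this]
  have h1 : ∫ p in D, (if 0 ≤ Z p then (1:ℝ) else -1) * g p
      = (∫ p in D ∩ {p | 0 ≤ Z p}, (if 0 ≤ Z p then (1:ℝ) else -1) * g p)
        + ∫ p in D ∩ {p | Z p < 0}, (if 0 ≤ Z p then (1:ℝ) else -1) * g p := by
    rw [← setIntegral_union hdisj (hD.inter hm1)
      (hint.mono_set Set.inter_subset_left)
      (hint.mono_set Set.inter_subset_left), hunion]
  rw [h1]
  have h2 : ∫ p in D ∩ {p | 0 ≤ Z p}, (if 0 ≤ Z p then (1:ℝ) else -1) * g p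
      = ∫ p in D ∩ {p | 0 ≤ Z p}, g p := by
    refine setIntegral_congr_fun (hD.inter hm0) fun p hp => ?_
    simp only [Set.mem_inter_iff, Set.mem_setOf_eq] at hp
    rw [if_pos hp.2, one_mul]
  have h3 : ∫ p in D ∩ {p | Z p < 0}, (if 0 ≤ Z p then (1:ℝ) else -1) * g p
      = ∫ p in D ∩ {p | Z p < 0}, (-1) * g p := by
    refine setIntegral_congr_fun (hD.inter hm1) fun p hp => ?_
    simp only [Set.mem_inter_iff, Set.mem_setOf_eq] at hp
    rw [if_neg (not_le.mpr hp.2)]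
  rw [h2, h3]
  simp only [neg_one_mul, integral_neg]
  ring
lemma split2 {D : Set (ℝ × ℝ)} (hD : MeasurableSet D) {Z : ℝ × ℝ → ℝ} (hZ : Measurable Z)
    (k : ℝ) {g h : ℝ × ℝ → ℝ}
    (hgh : ∀ p, g p = sgn (Z p) * (k * h p))
    (hint : IntegrableOn g D volume) :
    ∫ p in D, g p = k * ((∫ p in D ∩ {p | 0 ≤ Z p}, h p)
      - ∫ p in D ∩ {p | Z p < 0}, h p) := by
  have hgh' : ∀ p, g p = (if 0 ≤ Z p then (1:ℝ) else -1) * (k * h p) := fun p => hgh p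
  have h1 : ∫ p in D, g p = ∫ p in D, (if 0 ≤ Z p then (1:ℝ) else -1) * (k * h p) :=
    integral_congr_ae (Filter.Eventually.of_forall hgh')
  rw [h1, split hD hZ (hint.congr (Filter.Eventually.of_forall hgh'))]
  simp only [integral_const_mul]
  ring


theorem stmt3 (τ0 : ℝ) (hτ0 : 0 < τ0) (D : Set (ℝ × ℝ)) (hDmeas : MeasurableSet D)
    (hDbdd : Bornology.IsBounded D) (u : ℝ × ℝ → ℝ)
    (hu_int : IntegrableOn u D volume)
    (hu_pos : ∀ p ∈ D, 0 < u p)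
    (lam σ : ℝ) (hσ : 0 < σ) :
    HasDerivAt (fun s => Uloss τ0 D u lam s)
      ((Real.sqrt (2 * Real.pi) * σ ^ 2)⁻¹ *
        ((∫ p in D ∩ {p : ℝ × ℝ | 0 ≤ p.1 + τ0 * p.2},
            u p * Real.exp (-(p.1 + τ0 * p.2 - lam) ^ 2 / (2 * σ ^ 2)) *
              (p.1 + τ0 * p.2 - lam)) -
         ∫ p in D ∩ {p : ℝ × ℝ | p.1 + τ0 * p.2 < 0},
            u p * Real.exp (-(p.1 + τ0 * p.2 - lam) ^ 2 / (2 * σ ^ 2)) *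
              (p.1 + τ0 * p.2 - lam)))
      σ ∧
    (Real.sqrt (2 * Real.pi) * σ ^ 2)⁻¹ *
        ((∫ p in D ∩ {p : ℝ × ℝ | 0 ≤ p.1 + τ0 * p.2},
            u p * Real.exp (-(p.1 + τ0 * p.2 - lam) ^ 2 / (2 * σ ^ 2)) *
              (p.1 + τ0 * p.2 - lam)) -
         ∫ p in D ∩ {p : ℝ × ℝ | p.1 + τ0 * p.2 < 0},
            u p * Real.exp (-(p.1 + τ0 * p.2 - lam) ^ 2 / (2 * σ ^ 2)) *
              (p.1 + τ0 * p.2 - lam)) =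
      σ * deriv (deriv (fun l => Uloss τ0 D u l σ)) lam := by
  have hsqrt : 0 < Real.sqrt (2 * Real.pi) := sqrt2pi_pos
  have hσne : σ ≠ 0 := ne_of_gt hσ
  have hZ : Measurable (fun p : ℝ × ℝ => p.1 + τ0 * p.2) :=
    measurable_fst.add (measurable_snd.const_mul τ0)
  obtain ⟨r, hr⟩ := hDbdd.subset_closedBall (0 : ℝ × ℝ)
  set R := (1 + τ0) * r with hRdef
  have hRZ : ∀ p ∈ D, |p.1 + τ0 * p.2| ≤ R := by
    intro p hp
    have hpn : ‖p‖ ≤ r := by simpa [Metric.mem_closedBall, dist_zero_right] using hr hp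
    have h1 : |p.1| ≤ ‖p‖ := norm_fst_le p
    have h2 : |p.2| ≤ ‖p‖ := norm_snd_le p
    calc |p.1 + τ0 * p.2| ≤ |p.1| + |τ0 * p.2| := abs_add_le _ _
      _ = |p.1| + τ0 * |p.2| := by rw [abs_mul, abs_of_pos hτ0]
      _ ≤ ‖p‖ + τ0 * ‖p‖ := by
          have := mul_le_mul_of_nonneg_left h2 hτ0.le
          linarith
      _ = (1 + τ0) * ‖p‖ := by ring
      _ ≤ (1 + τ0) * r := by
          have h3 : (0:ℝ) ≤ 1 + τ0 := by linarith
          exact mul_le_mul_of_nonneg_left hpn h3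
  set C₀ := (Real.sqrt (2 * Real.pi))⁻¹ * ∫ t : ℝ, Real.exp (-t ^ 2 / 2) with hC₀def
  have hb₀ : ∀ a : ℝ, ∀ p ∈ D, |Ffun a σ (p.1 + τ0 * p.2)| ≤ C₀ := by
    intro a p _
    rw [Ffun]
    split_ifs <;> exact Qfun_abs_le _
  -- σ-derivative
  have hb1 : ∀ p ∈ D, ∀ x ∈ Metric.ball σ (σ / 2),
      |f1' lam x (p.1 + τ0 * p.2)| ≤
        (Real.sqrt (2 * Real.pi) * (σ / 2) ^ 2)⁻¹ * (R + |lam|) := by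
    intro p hp x hx
    have hx2 : σ / 2 < x := by
      have h := abs_sub_lt_iff.mp (by simpa [Real.dist_eq] using hx)
      linarith [h.2]
    have hx0 : 0 < x := lt_trans (by positivity) hx2
    have hzR : |p.1 + τ0 * p.2| ≤ R := hRZ p hp
    have hzl : |p.1 + τ0 * p.2 - lam| ≤ R + |lam| := by
      calc |p.1 + τ0 * p.2 - lam| ≤ |p.1 + τ0 * p.2| + |lam| := abs_sub _ _
        _ ≤ R + |lam| := by linarith
    have hE : Real.exp (-(p.1 + τ0 * p.2 - lam) ^ 2 / (2 * x ^ 2)) ≤ 1 := by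
      rw [Real.exp_le_one_iff]
      exact div_nonpos_of_nonpos_of_nonneg (neg_nonpos.mpr (sq_nonneg _)) (by positivity)
    have h1 : |f1' lam x (p.1 + τ0 * p.2)| = (Real.sqrt (2 * Real.pi) * x ^ 2)⁻¹ *
        (Real.exp (-(p.1 + τ0 * p.2 - lam) ^ 2 / (2 * x ^ 2)) * |p.1 + τ0 * p.2 - lam|) := by
      rw [f1', abs_mul, sgn_abs, one_mul, abs_mul, abs_mul,
        abs_of_nonneg (by positivity : (0:ℝ) ≤ (Real.sqrt (2 * Real.pi) * x ^ 2)⁻¹),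
        abs_of_nonneg (Real.exp_pos _).le]
    rw [h1]
    calc (Real.sqrt (2 * Real.pi) * x ^ 2)⁻¹ *
        (Real.exp (-(p.1 + τ0 * p.2 - lam) ^ 2 / (2 * x ^ 2)) * |p.1 + τ0 * p.2 - lam|)
        ≤ (Real.sqrt (2 * Real.pi) * (σ / 2) ^ 2)⁻¹ * (1 * (R + |lam|)) := by
          gcongr <;> first
            | exact hE
            | exact hzl
            | exact hx2.le
            | positivity
      _ = (Real.sqrt (2 * Real.pi) * (σ / 2) ^ 2)⁻¹ * (R + |lam|) := by ring
  have hd1 : ∀ p ∈ D, ∀ x ∈ Metric.ball σ (σ / 2),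
      HasDerivAt (fun y => Ffun lam y (p.1 + τ0 * p.2)) (f1' lam x (p.1 + τ0 * p.2)) x := by
    intro p _ x hx
    have hx2 : σ / 2 < x := by
      have h := abs_sub_lt_iff.mp (by simpa [Real.dist_eq] using hx)
      linarith [h.2]
    exact L1 lam _ (ne_of_gt (lt_trans (by positivity) hx2))
  have happ1 := key hDmeas hu_int hZ (x₀ := σ) (ε := σ / 2)
      (f := fun s z => Ffun lam s z) (f' := fun s z => f1' lam s z)
      (by positivity) (fun x => measurable_Ffun lam x) (measurable_f1' lam σ)
      (hb₀ lam) hb1 hd1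
  have hval1 : (∫ p in D, u p * f1' lam σ (p.1 + τ0 * p.2))
      = (Real.sqrt (2 * Real.pi) * σ ^ 2)⁻¹ *
        ((∫ p in D ∩ {p : ℝ × ℝ | 0 ≤ p.1 + τ0 * p.2},
            u p * Real.exp (-(p.1 + τ0 * p.2 - lam) ^ 2 / (2 * σ ^ 2)) *
              (p.1 + τ0 * p.2 - lam)) -
         ∫ p in D ∩ {p : ℝ × ℝ | p.1 + τ0 * p.2 < 0},
            u p * Real.exp (-(p.1 + τ0 * p.2 - lam) ^ 2 / (2 * σ ^ 2)) *
              (p.1 + τ0 * p.2 - lam)) := by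
    refine split2 hDmeas hZ _ (fun p => ?_) happ1.1
    simp only [f1']
    ring
  have hpart1 : HasDerivAt (fun s => Uloss τ0 D u lam s)
      ((Real.sqrt (2 * Real.pi) * σ ^ 2)⁻¹ *
        ((∫ p in D ∩ {p : ℝ × ℝ | 0 ≤ p.1 + τ0 * p.2},
            u p * Real.exp (-(p.1 + τ0 * p.2 - lam) ^ 2 / (2 * σ ^ 2)) *
              (p.1 + τ0 * p.2 - lam)) -
         ∫ p in D ∩ {p : ℝ × ℝ | p.1 + τ0 * p.2 < 0},
            u p * Real.exp (-(p.1 + τ0 * p.2 - lam) ^ 2 / (2 * σ ^ 2)) *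
              (p.1 + τ0 * p.2 - lam))) σ := by
    have h := happ1.2
    rw [hval1] at h
    exact h
  -- λ-derivatives
  have hb2 : ∀ x z : ℝ, |f2' σ x z| ≤ (Real.sqrt (2 * Real.pi) * σ)⁻¹ := by
    intro x z
    have hE : Real.exp (-(z - x) ^ 2 / (2 * σ ^ 2)) ≤ 1 := by
      rw [Real.exp_le_one_iff]
      exact div_nonpos_of_nonpos_of_nonneg (neg_nonpos.mpr (sq_nonneg _)) (by positivity)
    rw [f2', abs_mul, sgn_abs, one_mul, abs_mul,
      abs_of_nonneg (by positivity : (0:ℝ) ≤ (Real.sqrt (2 * Real.pi) * σ)⁻¹),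
      abs_of_nonneg (Real.exp_pos _).le]
    calc (Real.sqrt (2 * Real.pi) * σ)⁻¹ * Real.exp (-(z - x) ^ 2 / (2 * σ ^ 2))
        ≤ (Real.sqrt (2 * Real.pi) * σ)⁻¹ * 1 := by gcongr
      _ = (Real.sqrt (2 * Real.pi) * σ)⁻¹ := mul_one _
  have hV : ∀ l : ℝ, HasDerivAt (fun l => Uloss τ0 D u l σ)
      (∫ p in D, u p * f2' σ l (p.1 + τ0 * p.2)) l := by
    intro l
    have happ2 := key hDmeas hu_int hZ (x₀ := l) (ε := 1)
      (f := fun a z => Ffun a σ z) (f' := fun a z => f2' σ a z)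
      one_pos (fun x => measurable_Ffun x σ) (measurable_f2' σ l)
      (fun p hp => hb₀ l p hp)
      (fun p _ x _ => hb2 x _)
      (fun p _ x _ => L2 σ _ hσne x)
    exact happ2.2
  have hderivV : deriv (fun l => Uloss τ0 D u l σ)
      = fun l => ∫ p in D, u p * f2' σ l (p.1 + τ0 * p.2) :=
    funext fun l => (hV l).deriv
  have hb3 : ∀ p ∈ D, ∀ x ∈ Metric.ball lam 1,
      |f3' σ x (p.1 + τ0 * p.2)| ≤
        (Real.sqrt (2 * Real.pi) * σ)⁻¹ * ((R + (|lam| + 1)) / σ ^ 2) := by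
    intro p hp x hx
    have hzR : |p.1 + τ0 * p.2| ≤ R := hRZ p hp
    have hxl : |x - lam| ≤ 1 := le_of_lt (by simpa [Real.dist_eq] using hx)
    have hxb : |x| ≤ |lam| + 1 := by
      have h : lam + (x - lam) = x := by ring
      calc |x| = |lam + (x - lam)| := by rw [h]
        _ ≤ |lam| + |x - lam| := abs_add_le _ _
        _ ≤ |lam| + 1 := by linarith
    have hzx : |p.1 + τ0 * p.2 - x| ≤ R + (|lam| + 1) := by
      calc |p.1 + τ0 * p.2 - x| ≤ |p.1 + τ0 * p.2| + |x| := abs_sub _ _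
        _ ≤ R + (|lam| + 1) := by linarith
    have hE : Real.exp (-(p.1 + τ0 * p.2 - x) ^ 2 / (2 * σ ^ 2)) ≤ 1 := by
      rw [Real.exp_le_one_iff]
      exact div_nonpos_of_nonpos_of_nonneg (neg_nonpos.mpr (sq_nonneg _)) (by positivity)
    have h1 : |f3' σ x (p.1 + τ0 * p.2)| = (Real.sqrt (2 * Real.pi) * σ)⁻¹ *
        (Real.exp (-(p.1 + τ0 * p.2 - x) ^ 2 / (2 * σ ^ 2)) *
          (|p.1 + τ0 * p.2 - x| / σ ^ 2)) := by
      rw [f3', abs_mul, sgn_abs, one_mul, abs_mul, abs_mul, abs_div,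
        abs_of_nonneg (by positivity : (0:ℝ) ≤ (Real.sqrt (2 * Real.pi) * σ)⁻¹),
        abs_of_nonneg (Real.exp_pos _).le,
        abs_of_nonneg (by positivity : (0:ℝ) ≤ σ ^ 2)]
    rw [h1]
    calc (Real.sqrt (2 * Real.pi) * σ)⁻¹ *
        (Real.exp (-(p.1 + τ0 * p.2 - x) ^ 2 / (2 * σ ^ 2)) *
          (|p.1 + τ0 * p.2 - x| / σ ^ 2))
        ≤ (Real.sqrt (2 * Real.pi) * σ)⁻¹ * (1 * ((R + (|lam| + 1)) / σ ^ 2)) := by gcongr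
      _ = (Real.sqrt (2 * Real.pi) * σ)⁻¹ * ((R + (|lam| + 1)) / σ ^ 2) := by ring
  have happ3 := key hDmeas hu_int hZ (x₀ := lam) (ε := 1)
      (f := fun a z => f2' σ a z) (f' := fun a z => f3' σ a z)
      one_pos (fun x => measurable_f2' σ x) (measurable_f3' σ lam)
      (fun p _ => hb2 lam _) hb3
      (fun p _ x _ => L3 σ _ x)
  have h3d : deriv (fun l => ∫ p in D, u p * f2' σ l (p.1 + τ0 * p.2)) lam
      = ∫ p in D, u p * f3' σ lam (p.1 + τ0 * p.2) :=
    HasDerivAt.deriv (by exact happ3.2)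
  have hval3 : (∫ p in D, u p * f3' σ lam (p.1 + τ0 * p.2))
      = ((Real.sqrt (2 * Real.pi) * σ)⁻¹ * (σ ^ 2)⁻¹) *
        ((∫ p in D ∩ {p : ℝ × ℝ | 0 ≤ p.1 + τ0 * p.2},
            u p * Real.exp (-(p.1 + τ0 * p.2 - lam) ^ 2 / (2 * σ ^ 2)) *
              (p.1 + τ0 * p.2 - lam)) -
         ∫ p in D ∩ {p : ℝ × ℝ | p.1 + τ0 * p.2 < 0},
            u p * Real.exp (-(p.1 + τ0 * p.2 - lam) ^ 2 / (2 * σ ^ 2)) *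
              (p.1 + τ0 * p.2 - lam)) := by
    refine split2 hDmeas hZ _ (fun p => ?_) happ3.1
    simp only [f3']
    ring
  refine ⟨hpart1, ?_⟩
  rw [hderivV, h3d, hval3]
  have hc : (Real.sqrt (2 * Real.pi) * σ ^ 2)⁻¹
      = σ * ((Real.sqrt (2 * Real.pi) * σ)⁻¹ * (σ ^ 2)⁻¹) := by
    rw [mul_inv, mul_inv]
    field_simp
  rw [hc]
  ring
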